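/- Let (Ω, 𝒜) be a measurable space, μ a probability measure on Ω, d a natural number, and X : Ω → (Fin d → ℝ) a measurable function such that each component ω ↦ X ω j is μ-integrable. Then there exists ω ∈ Ω such that toLex (fun j => ∫ X · j ∂μ) ≤ toLex (X ω) in the lexicographic order on Fin d → ℝ. -/

import Mathlib

open MeasureTheory

lemma lex_le_of_head_lt {d : ℕ} {a b : Fin (d+1) → ℝ} (h : a 0 < b 0) :
    toLex a ≤ toLex b :=
  le_of_lt ⟨0, fun j hj => absurd hj (Fin.not_lt_zero j), h⟩

lemma lex_le_of_head_eq {d : ℕ} {a b : Fin (d+1) → ℝ} (h0 : a 0 = b 0)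
    (ht : toLex (a ∘ Fin.succ) ≤ toLex (b ∘ Fin.succ)) : toLex a ≤ toLex b := by
  rcases ht.lt_or_eq with h | h
  · obtain ⟨i, hlt, hi⟩ := h
    refine le_of_lt ⟨i.succ, fun j hj => ?_, hi⟩
    refine Fin.cases (fun _ => h0) (fun k hk => ?_) j hj
    exact hlt k (by simpa [Fin.succ_lt_succ_iff] using hk)
  · have : a ∘ Fin.succ = b ∘ Fin.succ := congrArg ofLex h
    have hab : a = b := by
      funext j
      refine Fin.cases h0 (fun k => congrFun this k) j
    exact le_of_eq (congrArg toLex hab)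

lemma aux {Ω : Type*} [MeasurableSpace Ω] : ∀ (d : ℕ) (μ : Measure Ω)
    [IsProbabilityMeasure μ] (X : Ω → (Fin d → ℝ)), Measurable X →
    (∀ j : Fin d, Integrable (fun ω => X ω j) μ) →
    μ {ω | toLex (fun j : Fin d => ∫ ω', X ω' j ∂μ) ≤ toLex (X ω)} ≠ 0 := by
  intro d
  induction d with
  | zero =>
    intro μ _ X hX hint
    have : {ω | toLex (fun j : Fin 0 => ∫ ω', X ω' j ∂μ) ≤ toLex (X ω)} = Set.univ := by
      ext ω
      simp only [Set.mem_setOf_eq, Set.mem_univ, iff_true]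
      exact le_of_eq (congrArg toLex (funext fun j => j.elim0))
    rw [this]
    simp
  | succ d ih =>
    intro μ _ X hX hint
    set m0 : ℝ := ∫ ω', X ω' 0 ∂μ with hm0
    by_cases hA : μ {ω | m0 < X ω 0} = 0
    · -- a.e. X ω 0 ≤ m0, hence = m0 a.e.
      have hle : (fun ω => X ω 0) ≤ᵐ[μ] (fun _ => m0) := by
        rw [Filter.EventuallyLE, ae_iff]
        simpa [not_le] using hA
      have hconstint : Integrable (fun _ : Ω => m0) μ := integrable_const _
      have heq : (fun ω => X ω 0) =ᵐ[μ] (fun _ => m0) := by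
        rw [← integral_eq_iff_of_ae_le (hint 0) hconstint hle]
        simp [hm0]
      -- tail
      set Y : Ω → (Fin d → ℝ) := fun ω => X ω ∘ Fin.succ with hY
      have hYmeas : Measurable Y := by
        apply measurable_pi_lambda
        intro j
        exact (measurable_pi_apply j.succ).comp hX
      have hYint : ∀ j : Fin d, Integrable (fun ω => Y ω j) μ := fun j => hint j.succ
      have hne := ih μ Y hYmeas hYint
      -- intersect with E
      have hE : μ {ω | X ω 0 = m0} = 1 := by
        have := heq
        rw [Filter.EventuallyEq, ae_iff] at this
        have h2 := prob_compl_eq_zero_iff (μ := μ)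
          (s := {ω | X ω 0 = m0}) ((measurable_pi_apply 0).comp hX (measurableSet_singleton m0))
        apply h2.mp
        rw [Set.compl_setOf]
        exact this
      have hsub : {ω | X ω 0 = m0} ∩ {ω | toLex (fun j : Fin d => ∫ ω', Y ω' j ∂μ) ≤ toLex (Y ω)}
          ⊆ {ω | toLex (fun j : Fin (d+1) => ∫ ω', X ω' j ∂μ) ≤ toLex (X ω)} := by
        rintro ω ⟨h1, h2⟩
        refine lex_le_of_head_eq (by simpa [hm0] using h1.symm) ?_
        have : (fun j : Fin (d+1) => ∫ ω', X ω' j ∂μ) ∘ Fin.succ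
            = fun j : Fin d => ∫ ω', Y ω' j ∂μ := by
          funext j; simp [hY]
        rw [this]
        exact h2
      intro hzero
      apply hne
      have hinter : μ ({ω | X ω 0 = m0} ∩ {ω | toLex (fun j : Fin d => ∫ ω', Y ω' j ∂μ) ≤ toLex (Y ω)}) = 0 :=
        le_antisymm (le_trans (measure_mono hsub) hzero.le) zero_le
      have hcompl : μ {ω | X ω 0 = m0}ᶜ = 0 := by
        rw [Set.compl_setOf]
        rw [Filter.EventuallyEq, ae_iff] at heq
        exact heq
      refine le_antisymm ?_ zero_le
      calc μ {ω | toLex (fun j : Fin d => ∫ ω', Y ω' j ∂μ) ≤ toLex (Y ω)}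
          ≤ μ (({ω | X ω 0 = m0} ∩ {ω | toLex (fun j : Fin d => ∫ ω', Y ω' j ∂μ) ≤ toLex (Y ω)}) ∪ {ω | X ω 0 = m0}ᶜ) := by
            apply measure_mono
            intro ω h
            by_cases hω : X ω 0 = m0
            · exact Or.inl ⟨hω, h⟩
            · exact Or.inr hω
        _ ≤ μ ({ω | X ω 0 = m0} ∩ {ω | toLex (fun j : Fin d => ∫ ω', Y ω' j ∂μ) ≤ toLex (Y ω)}) + μ {ω | X ω 0 = m0}ᶜ := measure_union_le _ _
        _ = 0 := by rw [hinter, hcompl, add_zero]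
    · intro hzero
      apply hA
      refine le_antisymm (le_trans (measure_mono ?_) hzero.le) zero_le
      intro ω hω
      exact lex_le_of_head_lt hω

theorem stmt0 {Ω : Type*} [MeasurableSpace Ω] (μ : Measure Ω) [IsProbabilityMeasure μ]
    (d : ℕ) (X : Ω → (Fin d → ℝ)) (hX : Measurable X)
    (hint : ∀ j : Fin d, Integrable (fun ω => X ω j) μ) :
    ∃ ω : Ω, toLex (fun j : Fin d => ∫ ω', X ω' j ∂μ) ≤ toLex (X ω) := by
  have := aux d μ X hX hint
  exact nonempty_of_measure_ne_zero this
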